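/- arXiv:1611.08876 — 3 statements merged into one kernel-verified Lean document; each statement's English description precedes it below -/
import Mathlib

section
/- Define formal power series over ℚ: I0(t) = ∑_{d≥0} (∏_{j=1}^{d} (5j−4))^5 / (5^{5d}·(5d)!) · t^{5d} and I1(t) = ∑_{d≥0} (∏_{j=1}^{d} (5j−3))^5 / (5^{5d}·(5d+1)!) · t^{5d+1}. Then, with ' denoting d/dt, the following identity holds in ℚ[[t]]: (5^5 − t^5)·t·(I1'''·I0 − I1·I0''' − I1''·I0' + I1'·I0'') = 5·t^4·( t·(I1''·I0 − I1·I0'') + I1'·I0 − I1·I0' ). -/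
open PowerSeries

/-- The series `I0` of the FJRW I-function of the quintic. -/
noncomputable def fjrwI0 : PowerSeries ℚ :=
  PowerSeries.mk fun n =>
    if n % 5 = 0 then
      ((∏ j ∈ Finset.range (n / 5), (5 * (j : ℚ) + 1)) ^ 5) / (5 ^ n * n.factorial)
    else 0

/-- The series `I1` of the FJRW I-function of the quintic. -/
noncomputable def fjrwI1 : PowerSeries ℚ :=
  PowerSeries.mk fun n =>
    if n % 5 = 1 then
      ((∏ j ∈ Finset.range (n / 5), (5 * (j : ℚ) + 2)) ^ 5) / (5 ^ (n - 1) * n.factorial)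
    else 0

noncomputable def psD : PowerSeries ℚ → PowerSeries ℚ := fun f => PowerSeries.derivative ℚ f

lemma fact_add_five (n : ℕ) : ((n+5).factorial : ℚ)
    = (n+5)*(n+4)*(n+3)*(n+2)*(n+1)*(n.factorial) := by
  rw [show n+5 = (n+4)+1 from rfl, Nat.factorial_succ,
      show n+4 = (n+3)+1 from rfl, Nat.factorial_succ,
      show n+3 = (n+2)+1 from rfl, Nat.factorial_succ,
      show n+2 = (n+1)+1 from rfl, Nat.factorial_succ, Nat.factorial_succ]
  push_cast
  ring

lemma key0 (n : ℕ) : ((n:ℚ)+1)^4 * coeff n fjrwI0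
    = 3125 * (((n:ℚ)+2)*((n:ℚ)+3)*((n:ℚ)+4)*((n:ℚ)+5)) * coeff (n+5) fjrwI0 := by
  obtain ⟨q, r, hr, rfl⟩ : ∃ q r, r < 5 ∧ n = 5*q+r :=
    ⟨n/5, n%5, Nat.mod_lt _ (by norm_num), by omega⟩
  simp only [fjrwI0, coeff_mk]
  interval_cases r
  · rw [if_pos (by omega), if_pos (by omega),
      show (5*q+0)/5 = q by omega, show (5*q+0+5)/5 = q+1 by omega,
      Finset.prod_range_succ, show 5*q+0+5 = (5*q)+5 by ring, fact_add_five,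
      show 5*q+0 = 5*q by ring, pow_add]
    have h1 : ((5:ℚ))^(5*q) ≠ 0 := pow_ne_zero _ (by norm_num)
    have h2 : (((5*q).factorial : ℚ)) ≠ 0 := Nat.cast_ne_zero.mpr (Nat.factorial_ne_zero _)
    push_cast
    field_simp
    ring
  all_goals rw [if_neg (by omega), if_neg (by omega)]; ring

lemma key1 (n : ℕ) : ((n:ℚ)+1)^4 * coeff n fjrwI1
    = 3125 * (((n:ℚ)+2)*((n:ℚ)+3)*((n:ℚ)+4)*((n:ℚ)+5)) * coeff (n+5) fjrwI1 := by
  obtain ⟨q, r, hr, rfl⟩ : ∃ q r, r < 5 ∧ n = 5*q+r :=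
    ⟨n/5, n%5, Nat.mod_lt _ (by norm_num), by omega⟩
  simp only [fjrwI1, coeff_mk]
  interval_cases r
  · rw [if_neg (by omega), if_neg (by omega)]; ring
  · rw [if_pos (by omega), if_pos (by omega),
      show (5*q+1)/5 = q by omega, show (5*q+1+5)/5 = q+1 by omega,
      show 5*q+1-1 = 5*q by omega, show 5*q+1+5-1 = (5*q)+5 by omega,
      Finset.prod_range_succ,
      show 5*q+1+5 = (5*q+1)+5 by ring, fact_add_five, pow_add]
    have h1 : ((5:ℚ))^(5*q) ≠ 0 := pow_ne_zero _ (by norm_num)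
    have h2 : (((5*q+1).factorial : ℚ)) ≠ 0 := Nat.cast_ne_zero.mpr (Nat.factorial_ne_zero _)
    push_cast
    field_simp
    ring
  all_goals rw [if_neg (by omega), if_neg (by omega)]; ring

noncomputable def Eop (f : PowerSeries ℚ) : PowerSeries ℚ := f + X * psD f

lemma coeff_Eop (f : PowerSeries ℚ) (n : ℕ) :
    coeff n (Eop f) = ((n:ℚ)+1) * coeff n f := by
  cases n with
  | zero => simp [Eop, coeff_zero_X_mul]
  | succ n =>
    simp only [Eop, map_add, coeff_succ_X_mul, psD, coeff_derivative]
    push_cast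
    ring

lemma coeff_psD (f : PowerSeries ℚ) (n : ℕ) :
    coeff n (psD f) = coeff (n+1) f * ((n:ℚ)+1) := by
  simp [psD, coeff_derivative]

lemma Eop_expand (f : PowerSeries ℚ) :
    X * (Eop (Eop (Eop (Eop f)))) =
      X * f + 15 * X^2 * psD f + 25 * X^3 * psD (psD f)
        + 10 * X^4 * psD (psD (psD f)) + X^5 * psD (psD (psD (psD f))) := by
  simp only [Eop, psD, map_add, Derivation.leibniz, derivative_X, smul_eq_mul,
    Derivation.map_one_eq_zero, map_zero]
  ring

lemma hP0 : X * (Eop (Eop (Eop (Eop fjrwI0)))) = C 3125 * psD (psD (psD (psD fjrwI0))) := by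
  ext n
  cases n with
  | zero =>
    rw [coeff_zero_X_mul, coeff_C_mul]
    simp only [coeff_psD]
    norm_num [fjrwI0, coeff_mk]
  | succ n =>
    rw [coeff_succ_X_mul, coeff_Eop, coeff_Eop, coeff_Eop, coeff_Eop, coeff_C_mul]
    simp only [coeff_psD]
    rw [show n+1+1+1+1+1 = n+5 from rfl]
    push_cast
    linear_combination key0 n

lemma hP1 : X * (Eop (Eop (Eop (Eop fjrwI1)))) = C 3125 * psD (psD (psD (psD fjrwI1))) := by
  ext n
  cases n with
  | zero =>
    rw [coeff_zero_X_mul, coeff_C_mul]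
    simp only [coeff_psD]
    norm_num [fjrwI1, coeff_mk]
  | succ n =>
    rw [coeff_succ_X_mul, coeff_Eop, coeff_Eop, coeff_Eop, coeff_Eop, coeff_C_mul]
    simp only [coeff_psD]
    rw [show n+1+1+1+1+1 = n+5 from rfl]
    push_cast
    linear_combination key1 n

lemma hP0' : X*fjrwI0 + 15*X^2*psD fjrwI0 + 25*X^3*psD (psD fjrwI0)
    + 10*X^4*psD (psD (psD fjrwI0)) + X^5 * psD (psD (psD (psD fjrwI0)))
    = 3125 * psD (psD (psD (psD fjrwI0))) := by
  rw [← Eop_expand, show ((3125 : PowerSeries ℚ)) = C 3125 from (map_ofNat (C (R := ℚ)) 3125).symm]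
  exact hP0

lemma hP1' : X*fjrwI1 + 15*X^2*psD fjrwI1 + 25*X^3*psD (psD fjrwI1)
    + 10*X^4*psD (psD (psD fjrwI1)) + X^5 * psD (psD (psD (psD fjrwI1)))
    = 3125 * psD (psD (psD (psD fjrwI1))) := by
  rw [← Eop_expand, show ((3125 : PowerSeries ℚ)) = C 3125 from (map_ofNat (C (R := ℚ)) 3125).symm]
  exact hP1

lemma psD_const : psD (5 ^ 5 : PowerSeries ℚ) = 0 := by
  rw [show (5^5 : PowerSeries ℚ) = C (5^5) from by rw [map_pow, map_ofNat]]
  simp [psD]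

lemma psD_five : psD (5 : PowerSeries ℚ) = 0 := by
  rw [show (5 : PowerSeries ℚ) = C 5 from (map_ofNat (C (R := ℚ)) 5).symm]
  simp [psD]

theorem stmt_6 :
    ((5 ^ 5 : PowerSeries ℚ) - PowerSeries.X ^ 5) * PowerSeries.X *
        (psD (psD (psD fjrwI1)) * fjrwI0 - fjrwI1 * psD (psD (psD fjrwI0))
          - psD (psD fjrwI1) * psD fjrwI0 + psD fjrwI1 * psD (psD fjrwI0)) =
      5 * PowerSeries.X ^ 4 *
        (PowerSeries.X * (psD (psD fjrwI1) * fjrwI0 - fjrwI1 * psD (psD fjrwI0))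
          + psD fjrwI1 * fjrwI0 - fjrwI1 * psD fjrwI0) := by
  set A : PowerSeries ℚ := ((5 ^ 5 : PowerSeries ℚ) - PowerSeries.X ^ 5) * PowerSeries.X *
        (psD (psD (psD fjrwI1)) * fjrwI0 - fjrwI1 * psD (psD (psD fjrwI0))
          - psD (psD fjrwI1) * psD fjrwI0 + psD fjrwI1 * psD (psD fjrwI0)) with hA
  set B : PowerSeries ℚ := 5 * PowerSeries.X ^ 4 *
        (PowerSeries.X * (psD (psD fjrwI1) * fjrwI0 - fjrwI1 * psD (psD fjrwI0))
          + psD fjrwI1 * fjrwI0 - fjrwI1 * psD fjrwI0) with hB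
  have hT : X * psD (A - B) = A - B := by
    rw [hA, hB]
    have h1 := psD_const
    have h2 := psD_five
    simp only [psD] at h1 h2 ⊢
    simp only [map_sub, map_add, Derivation.leibniz, Derivation.leibniz_pow,
      derivative_X, smul_eq_mul, nsmul_eq_mul, h1, h2, map_zero,
      Derivation.map_one_eq_zero]
    have e0 := hP0'
    have e1 := hP1'
    simp only [psD] at e0 e1
    push_cast
    linear_combination (X^2 * fjrwI1) * e0 - (X^2 * fjrwI0) * e1
  have hcoeff : ∀ n, coeff n (A - B) = 0 := by
    intro n
    match n with
    | 0 =>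
      have := congrArg (coeff 0) hT
      rw [coeff_zero_X_mul] at this
      exact this.symm
    | 1 =>
      rw [map_sub]
      have hA1 : coeff 1 A = 0 := by
        rw [hA, show ((5 ^ 5 : PowerSeries ℚ) - PowerSeries.X ^ 5) * PowerSeries.X *
        (psD (psD (psD fjrwI1)) * fjrwI0 - fjrwI1 * psD (psD (psD fjrwI0))
          - psD (psD fjrwI1) * psD fjrwI0 + psD fjrwI1 * psD (psD fjrwI0)) =
          X * (((5 ^ 5 : PowerSeries ℚ) - PowerSeries.X ^ 5) *
          (psD (psD (psD fjrwI1)) * fjrwI0 - fjrwI1 * psD (psD (psD fjrwI0))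
          - psD (psD fjrwI1) * psD fjrwI0 + psD fjrwI1 * psD (psD fjrwI0))) from by ring,
          coeff_succ_X_mul, coeff_zero_eq_constantCoeff]
        simp only [map_sub, map_add, map_mul, map_pow, map_ofNat, constantCoeff_X]
        simp only [← coeff_zero_eq_constantCoeff_apply]
        simp only [coeff_psD]
        norm_num [fjrwI0, fjrwI1, coeff_mk]
      have hB1 : coeff 1 B = 0 := by
        rw [hB, show (5 : PowerSeries ℚ) * PowerSeries.X ^ 4 *
        (PowerSeries.X * (psD (psD fjrwI1) * fjrwI0 - fjrwI1 * psD (psD fjrwI0))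
          + psD fjrwI1 * fjrwI0 - fjrwI1 * psD fjrwI0) =
          X ^ 4 * (5 * (PowerSeries.X * (psD (psD fjrwI1) * fjrwI0 - fjrwI1 * psD (psD fjrwI0))
          + psD fjrwI1 * fjrwI0 - fjrwI1 * psD fjrwI0)) from by ring,
          coeff_X_pow_mul']
        norm_num
      rw [hA1, hB1]; ring
    | (n+2) =>
      have := congrArg (coeff (n+2)) hT
      rw [coeff_succ_X_mul, coeff_psD] at this
      have hnn : ((n:ℚ)+1+1) ≠ 0 := by positivity
      have : ((n:ℚ)+2) * coeff (n+2) (A-B) = coeff (n+2) (A-B) := by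
        push_cast at this ⊢
        linear_combination this
      have hzero : ((n:ℚ)+1) * coeff (n+2) (A-B) = 0 := by linear_combination this
      have : ((n:ℚ)+1) ≠ 0 := by positivity
      exact (mul_eq_zero.mp hzero).resolve_left this
  have : A - B = 0 := by ext n; rw [hcoeff n, map_zero]
  exact sub_eq_zero.mp this
end

section
/- Let R be a commutative ring with a derivation D : R → R. Let F ∈ R be invertible, let G, A ∈ R, and let C_0, C_1, ..., C_5 ∈ R satisfy ∑_{r=0}^{5} C_r · D^r F = 0 and ∑_{r=0}^{5} C_r · D^r G = A. Define G1 := D(G·F^{−1}) and, for s = 0, ..., 4, C1_s := ∑_{r=s+1}^{5} C(r, s+1) · C_r · D^{r−1−s} F, where C(r,s+1) is a binomial coefficient. Then ∑_{s=0}^{4} C1_s · D^s G1 = A. -/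
theorem stmt_11 (R : Type*) [CommRing R] (D : R → R)
    (hDadd : ∀ x y : R, D (x + y) = D x + D y)
    (hDmul : ∀ x y : R, D (x * y) = D x * y + x * D y)
    (F Fi G A : R) (hF : F * Fi = 1) (C : ℕ → R)
    (hhom : ∑ r ∈ Finset.range 6, C r * D^[r] F = 0)
    (hinhom : ∑ r ∈ Finset.range 6, C r * D^[r] G = A)
    (G1 : R) (hG1 : G1 = D (G * Fi))
    (C1 : ℕ → R)
    (hC1 : ∀ s : ℕ, C1 s = ∑ r ∈ Finset.Icc (s + 1) 5, (r.choose (s + 1) : R) * C r * D^[r - 1 - s] F) :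
    ∑ s ∈ Finset.range 5, C1 s * D^[s] G1 = A := by
  obtain ⟨H, hH⟩ : ∃ H, H = G * Fi := ⟨_, rfl⟩
  have hG : G = H * F := by rw [hH, mul_assoc, mul_comm Fi F, hF, mul_one]
  rw [← hH] at hG1
  subst hG1
  rw [hG] at hinhom
  have e0 : ∀ x : R, D^[0] x = x := fun _ => rfl
  have e1 : ∀ x : R, D^[1] x = D x := fun _ => rfl
  have e2 : ∀ x : R, D^[2] x = D (D x) := fun _ => rfl
  have e3 : ∀ x : R, D^[3] x = D (D (D x)) := fun _ => rfl
  have e4 : ∀ x : R, D^[4] x = D (D (D (D x))) := fun _ => rfl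
  have e5 : ∀ x : R, D^[5] x = D (D (D (D (D x)))) := fun _ => rfl
  simp only [hC1, Finset.sum_range_succ, Finset.sum_range_zero] at hhom hinhom ⊢
  have i1 : Finset.Icc 1 5 = {1,2,3,4,5} := rfl
  have i2 : Finset.Icc 2 5 = {2,3,4,5} := rfl
  have i3 : Finset.Icc 3 5 = {3,4,5} := rfl
  have i4 : Finset.Icc 4 5 = {4,5} := rfl
  have i5 : Finset.Icc 5 5 = {5} := rfl
  norm_num [i1, i2, i3, i4, i5, Finset.sum_insert, Finset.mem_insert, Finset.sum_singleton, Nat.choose]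
  norm_num [i1, i2, i3, i4, i5, Finset.sum_insert, Finset.mem_insert, Finset.sum_singleton, Nat.choose] at *
  simp only [e0, e1, e2, e3, e4, e5, hDmul, hDadd] at hhom hinhom ⊢
  linear_combination hinhom - H * hhom
end

section
/- Let I0(t) = ∑_{d≥0} (∏_{j=1}^{d}(5j−4))^5 / (5^{5d}·(5d)!) · t^{5d} ∈ ℚ[[t]], and let D := t·d/dt be the Euler derivation on ℚ[[t]]. Then y := t·I0(t) satisfies the Picard–Fuchs equation t^5 · D^5 y = 5^5 · (D−1)(D−2)(D−3)(D−4)(D−5) y. -/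
open PowerSeries

/-- The Euler derivation `D = t d/dt` on `ℚ⟦t⟧`. -/
noncomputable def eulerD : PowerSeries ℚ → PowerSeries ℚ :=
  fun f => PowerSeries.X * PowerSeries.derivative ℚ f

/-- The operator `D - k`. -/
noncomputable def eulerE (k : ℚ) : PowerSeries ℚ → PowerSeries ℚ :=
  fun f => eulerD f - PowerSeries.C (R := ℚ) k * f

lemma coeff_eulerD (f : PowerSeries ℚ) (n : ℕ) :
    PowerSeries.coeff (R := ℚ) n (eulerD f) = n * PowerSeries.coeff (R := ℚ) n f := by
  unfold eulerD
  cases n with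
  | zero => simp
  | succ m =>
    rw [PowerSeries.coeff_succ_X_mul, PowerSeries.coeff_derivative]
    push_cast; ring

lemma coeff_eulerD_iter (k : ℕ) (f : PowerSeries ℚ) (n : ℕ) :
    PowerSeries.coeff (R := ℚ) n (eulerD^[k] f) = (n : ℚ) ^ k * PowerSeries.coeff (R := ℚ) n f := by
  induction k generalizing f with
  | zero => simp
  | succ m ih =>
    rw [Function.iterate_succ_apply, ih, coeff_eulerD, pow_succ]
    ring

lemma coeff_eulerE (k : ℚ) (f : PowerSeries ℚ) (n : ℕ) :
    PowerSeries.coeff (R := ℚ) n (eulerE k f) = ((n : ℚ) - k) * PowerSeries.coeff (R := ℚ) n f := by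
  unfold eulerE
  rw [map_sub, coeff_eulerD, PowerSeries.coeff_C_mul]
  ring

theorem stmt_12 :
    PowerSeries.X ^ 5 * eulerD^[5] (PowerSeries.X * fjrwI0) =
      5 ^ 5 * eulerE 1 (eulerE 2 (eulerE 3 (eulerE 4 (eulerE 5
        (PowerSeries.X * fjrwI0))))) := by
  set y := PowerSeries.X * fjrwI0 with hy
  have hc : ∀ n : ℕ, PowerSeries.coeff (R := ℚ) n y = if n % 5 = 1 then
      ((∏ j ∈ Finset.range ((n-1) / 5), (5 * (j : ℚ) + 1)) ^ 5) / (5 ^ (n-1) * (n-1).factorial)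
      else 0 := by
    intro n
    cases n with
    | zero => simp [hy]
    | succ m =>
      rw [hy, PowerSeries.coeff_succ_X_mul]
      simp only [fjrwI0, PowerSeries.coeff_mk, Nat.succ_sub_one]
      have : ((m + 1) % 5 = 1) ↔ (m % 5 = 0) := by omega
      simp only [this]
  have h5 : (5 ^ 5 : PowerSeries ℚ) = PowerSeries.C (R := ℚ) (5 ^ 5) := by
    rw [map_pow, map_ofNat]
  ext n
  rw [PowerSeries.coeff_X_pow_mul', h5, PowerSeries.coeff_C_mul,
    coeff_eulerE, coeff_eulerE, coeff_eulerE, coeff_eulerE, coeff_eulerE]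
  split_ifs with h
  · obtain ⟨m, rfl⟩ : ∃ m, n = m + 5 := ⟨n - 5, by omega⟩
    rw [Nat.add_sub_cancel, coeff_eulerD_iter]
    cases m with
    | zero => norm_num [hc]
    | succ p =>
      rw [hc, hc]
      have h1 : ((p + 1) % 5 = 1) ↔ (p % 5 = 0) := by omega
      have h2 : ((p + 1 + 5) % 5 = 1) ↔ (p % 5 = 0) := by omega
      by_cases hp : p % 5 = 0
      · obtain ⟨d, rfl⟩ : ∃ d, p = 5 * d := ⟨p / 5, by omega⟩
        rw [if_pos (h1.2 hp), if_pos (h2.2 hp)]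
        have e1 : 5 * d + 1 - 1 = 5 * d := by omega
        have e2 : 5 * d + 1 + 5 - 1 = 5 * d + 5 := by omega
        have e3 : (5 * d) / 5 = d := by omega
        have e4 : (5 * d + 5) / 5 = d + 1 := by omega
        rw [e1, e2, e3, e4, Finset.prod_range_succ]
        have hfac : ((5 * d + 5).factorial : ℚ) =
            (5 * d + 5) * ((5 * d + 4) * ((5 * d + 3) * ((5 * d + 2) *
              ((5 * d + 1) * (5 * d).factorial)))) := by
          rw [show 5 * d + 5 = (5 * d + 4) + 1 from rfl, Nat.factorial_succ,
            show 5 * d + 4 = (5 * d + 3) + 1 from rfl, Nat.factorial_succ,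
            show 5 * d + 3 = (5 * d + 2) + 1 from rfl, Nat.factorial_succ,
            show 5 * d + 2 = (5 * d + 1) + 1 from rfl, Nat.factorial_succ,
            show 5 * d + 1 = (5 * d) + 1 from rfl, Nat.factorial_succ]
          push_cast; ring
        have hne0 : ((5 * d).factorial : ℚ) ≠ 0 := by
          exact_mod_cast Nat.cast_ne_zero.2 (5 * d).factorial_ne_zero
        have hne1 : ((5 * d + 5).factorial : ℚ) ≠ 0 := by
          exact_mod_cast Nat.cast_ne_zero.2 (5 * d + 5).factorial_ne_zero
        rw [hfac]
        push_cast
        have h5d : (5 : ℚ) ^ (5 * d) ≠ 0 := by positivity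
        field_simp
        ring
      · rw [if_neg (fun hh => hp (h1.1 hh)), if_neg (fun hh => hp (h2.1 hh))]
        ring
  · -- n < 5
    interval_cases n <;> norm_num [hc]
end
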